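/- Let H be a complex Hilbert space, let P ∈ B(H) be a positive operator, let Q ∈ B(H) be a positive self-adjoint operator with Q² = P, and let V₁, …, Vₙ ∈ B(H) be such that the operators Tᵢ := VᵢP pairwise commute. Then the n-tuples A := (Q, Q, …, Q) and B := (V₁Q, …, VₙQ) criss-cross commute; in particular, for all i and k one has (VᵢQ)·Q·(VₖQ) = (VₖQ)·Q·(VᵢQ), i.e., Vᵢ P Vₖ Q = Vₖ P Vᵢ Q. -/

import Mathlib

/-- If `Q` is positive and `Q * Q * S = 0`, then `Q * S = 0`. -/
lemma cancel_pos_sq {H : Type*} [NormedAddCommGroup H] [InnerProductSpace ℂ H]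
    [CompleteSpace H] (Q S : H →L[ℂ] H) (hQ : Q.IsPositive)
    (h : Q * Q * S = 0) : Q * S = 0 := by
  ext y
  have h1 : (Q * Q * S) y = 0 := by rw [h]; rfl
  have h2 : inner ℂ ((Q * Q * S) y) (S y) = (0 : ℂ) := by rw [h1]; simp
  have hadj : ContinuousLinearMap.adjoint Q = Q := hQ.isSelfAdjoint.adjoint_eq
  have h3 : inner ℂ (Q (S y)) (Q (S y)) = (0 : ℂ) := by
    calc inner ℂ (Q (S y)) (Q (S y))
        = inner ℂ ((ContinuousLinearMap.adjoint Q) (Q (S y))) (S y) := by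
          rw [ContinuousLinearMap.adjoint_inner_left]
      _ = inner ℂ ((Q * Q * S) y) (S y) := by rw [hadj]; rfl
      _ = 0 := h2
  simpa using inner_self_eq_zero.mp h3

theorem crissCross_of_sphericalAluthge
    {H : Type*} [NormedAddCommGroup H] [InnerProductSpace ℂ H] [CompleteSpace H]
    {n : ℕ} (P Q : H →L[ℂ] H) (V : Fin n → H →L[ℂ] H)
    (hP : P.IsPositive) (hQ : Q.IsPositive) (hQ2 : Q * Q = P)
    (hT : ∀ i j, Commute (V i * P) (V j * P)) :
    (∀ i j k : Fin n, Q * (V j * Q) * Q = Q * (V j * Q) * Q ∧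
      (V i * Q) * Q * (V k * Q) = (V k * Q) * Q * (V i * Q)) ∧
    (∀ i k : Fin n, V i * P * (V k * Q) = V k * P * (V i * Q)) := by
  have hQsa : star Q = Q := by
    have := hQ.isSelfAdjoint; rwa [IsSelfAdjoint] at this
  have key : ∀ i k : Fin n, V i * P * (V k * Q) = V k * P * (V i * Q) := by
    intro i k
    set S : H →L[ℂ] H := V i * P * V k - V k * P * V i with hS
    have hSQQ : S * Q * Q = 0 := by
      have := hT i k
      rw [Commute, SemiconjBy] at this
      rw [hS]
      have : V i * P * V k * (Q * Q) - V k * P * V i * (Q * Q) = 0 := by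
        rw [hQ2]
        have h := hT i k
        rw [Commute, SemiconjBy] at h
        calc V i * P * V k * P - V k * P * V i * P
            = V i * P * (V k * P) - V k * P * (V i * P) := by noncomm_ring
          _ = 0 := by rw [h, sub_self]
      calc (V i * P * V k - V k * P * V i) * Q * Q
          = V i * P * V k * (Q * Q) - V k * P * V i * (Q * Q) := by noncomm_ring
        _ = 0 := this
    -- take adjoint: Q * Q * star S = 0
    have hadj : Q * Q * star S = 0 := by
      have := congrArg star hSQQ
      rwa [star_mul, star_mul, hQsa, star_zero, ← mul_assoc] at this
    have hQS : Q * star S = 0 := cancel_pos_sq Q (star S) hQ hadj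
    have hSQ : S * Q = 0 := by
      have := congrArg star hQS
      rwa [star_mul, hQsa, star_star, star_zero] at this
    have : V i * P * V k * Q - V k * P * V i * Q = 0 := by
      calc V i * P * V k * Q - V k * P * V i * Q = S * Q := by rw [hS]; noncomm_ring
        _ = 0 := hSQ
    have h := sub_eq_zero.mp this
    calc V i * P * (V k * Q) = V i * P * V k * Q := by noncomm_ring
      _ = V k * P * V i * Q := h
      _ = V k * P * (V i * Q) := by noncomm_ring
  refine ⟨fun i j k => ⟨rfl, ?_⟩, key⟩
  have h := key i k
  calc (V i * Q) * Q * (V k * Q) = V i * (Q * Q) * (V k * Q) := by noncomm_ring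
    _ = V i * P * (V k * Q) := by rw [hQ2]
    _ = V k * P * (V i * Q) := h
    _ = V k * (Q * Q) * (V i * Q) := by rw [hQ2]
    _ = (V k * Q) * Q * (V i * Q) := by noncomm_ring
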